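/- (SU rewrite of the multicalibration moment.) Assume π₊ ≠ π₋ and π₊² + π₋² > 0, and define the similar-pair marginal P_S̃ := (π₊²/(π₊²+π₋²))·P₊ + (π₋²/(π₊²+π₋²))·P₋. Then for all measurable f : 𝒳 → [0,1], c : 𝒳 → [−1,1], w : [0,1] → [−1,1], R_{c,w}(f) = ((π₊²+π₋²)/(π₊−π₋))·∫ c(x)·w(f(x)) dP_S̃(x) − ∫ c(x)·w(f(x))·(π₋/(π₊−π₋) + f(x)) dP_X(x). -/

import Mathlib

open MeasureTheory

lemma integrable_of_bound {X : Type*} [MeasurableSpace X] (μ : Measure X)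
    [IsFiniteMeasure μ] (h : X → ℝ) (hm : Measurable h) (C : ℝ)
    (hb : ∀ x, |h x| ≤ C) : Integrable h μ :=
  ⟨hm.aestronglyMeasurable, HasFiniteIntegral.of_bounded (C := C) (ae_of_all _ hb)⟩

/-- SU rewrite of the multicalibration witness moment in terms of the
similar-pair marginal `P_S̃` and the marginal `P_X`. -/
theorem su_rewrite_multicalibration {X : Type*} [MeasurableSpace X]
    (Pp Pm : Measure X) [IsProbabilityMeasure Pp] [IsProbabilityMeasure Pm]
    (pip : ℝ) (hpi : pip ∈ Set.Icc (0:ℝ) 1)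
    (hne : pip ≠ 1 - pip) (hpos : 0 < pip ^ 2 + (1 - pip) ^ 2)
    (f c : X → ℝ) (w : ℝ → ℝ)
    (hf : Measurable f) (hf01 : ∀ x, f x ∈ Set.Icc (0:ℝ) 1)
    (hc : Measurable c) (hc1 : ∀ x, c x ∈ Set.Icc (-1:ℝ) 1)
    (hw : Measurable w) (hw1 : ∀ v ∈ Set.Icc (0:ℝ) 1, w v ∈ Set.Icc (-1:ℝ) 1) :
    pip * ∫ x, c x * w (f x) * (1 - f x) ∂Pp
      - (1 - pip) * ∫ x, c x * w (f x) * f x ∂Pm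
    = (pip ^ 2 + (1 - pip) ^ 2) / (pip - (1 - pip)) *
        ∫ x, c x * w (f x)
          ∂(ENNReal.ofReal (pip ^ 2 / (pip ^ 2 + (1 - pip) ^ 2)) • Pp
            + ENNReal.ofReal ((1 - pip) ^ 2 / (pip ^ 2 + (1 - pip) ^ 2)) • Pm)
      - ∫ x, c x * w (f x) * ((1 - pip) / (pip - (1 - pip)) + f x)
          ∂(ENNReal.ofReal pip • Pp + ENNReal.ofReal (1 - pip) • Pm) := by
  have hd : pip - (1 - pip) ≠ 0 := sub_ne_zero.mpr hne
  set q : ℝ := 1 - pip with hq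
  set s : ℝ := pip ^ 2 + q ^ 2 with hs
  set k : ℝ := q / (pip - q) with hk
  -- bounds
  have habs : ∀ x : X, |c x * w (f x)| ≤ 1 := by
    intro x
    rw [abs_mul]
    have h1 := abs_le.mpr ⟨(hc1 x).1, (hc1 x).2⟩
    have h2 := abs_le.mpr ⟨(hw1 (f x) (hf01 x)).1, (hw1 (f x) (hf01 x)).2⟩
    calc |c x| * |w (f x)| ≤ 1 * 1 := by
          exact mul_le_mul h1 h2 (abs_nonneg _) zero_le_one
      _ = 1 := by ring
  have habsf : ∀ x : X, |c x * w (f x) * f x| ≤ 1 := by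
    intro x
    rw [abs_mul]
    have h2 : |f x| ≤ 1 := abs_le.mpr ⟨by linarith [(hf01 x).1], (hf01 x).2⟩
    calc |c x * w (f x)| * |f x| ≤ 1 * 1 :=
          mul_le_mul (habs x) h2 (abs_nonneg _) zero_le_one
      _ = 1 := by ring
  have hmg : Measurable fun x => c x * w (f x) := hc.mul (hw.comp hf)
  have hmgf : Measurable fun x => c x * w (f x) * f x := hmg.mul hf
  -- integrability
  have hig : ∀ (μ : Measure X) [IsFiniteMeasure μ],
      Integrable (fun x => c x * w (f x)) μ := fun μ _ =>
    integrable_of_bound μ _ hmg 1 habs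
  have higf : ∀ (μ : Measure X) [IsFiniteMeasure μ],
      Integrable (fun x => c x * w (f x) * f x) μ := fun μ _ =>
    integrable_of_bound μ _ hmgf 1 habsf
  have higk : ∀ (μ : Measure X) [IsFiniteMeasure μ],
      Integrable (fun x => c x * w (f x) * (k + f x)) μ := by
    intro μ _
    have : (fun x => c x * w (f x) * (k + f x))
        = fun x => k * (c x * w (f x)) + c x * w (f x) * f x := by
      funext x; ring
    rw [this]
    exact ((hig μ).const_mul k).add (higf μ)
  -- nonnegativity facts
  have hq0 : 0 ≤ q := by simp [hq]; exact hpi.2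
  have hp0 : 0 ≤ pip := hpi.1
  have hs0 : 0 < s := hpos
  have ha0 : 0 ≤ pip ^ 2 / s := div_nonneg (sq_nonneg _) hs0.le
  have hb0 : 0 ≤ q ^ 2 / s := div_nonneg (sq_nonneg _) hs0.le
  -- expand first RHS integral
  have e1 : ∫ x, c x * w (f x)
        ∂(ENNReal.ofReal (pip ^ 2 / s) • Pp + ENNReal.ofReal (q ^ 2 / s) • Pm)
      = (pip ^ 2 / s) * ∫ x, c x * w (f x) ∂Pp
        + (q ^ 2 / s) * ∫ x, c x * w (f x) ∂Pm := by
    rw [integral_add_measure ((hig Pp).smul_measure ENNReal.ofReal_ne_top)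
        ((hig Pm).smul_measure ENNReal.ofReal_ne_top),
      integral_smul_measure, integral_smul_measure,
      ENNReal.toReal_ofReal ha0, ENNReal.toReal_ofReal hb0, smul_eq_mul, smul_eq_mul]
  have e2 : ∫ x, c x * w (f x) * (k + f x)
        ∂(ENNReal.ofReal pip • Pp + ENNReal.ofReal q • Pm)
      = pip * ∫ x, c x * w (f x) * (k + f x) ∂Pp
        + q * ∫ x, c x * w (f x) * (k + f x) ∂Pm := by
    rw [integral_add_measure ((higk Pp).smul_measure ENNReal.ofReal_ne_top)
        ((higk Pm).smul_measure ENNReal.ofReal_ne_top),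
      integral_smul_measure, integral_smul_measure,
      ENNReal.toReal_ofReal hp0, ENNReal.toReal_ofReal hq0, smul_eq_mul, smul_eq_mul]
  rw [e1, e2]
  -- split integrals of products/sums
  have e3 : ∀ (μ : Measure X) [IsFiniteMeasure μ],
      ∫ x, c x * w (f x) * (k + f x) ∂μ
        = k * ∫ x, c x * w (f x) ∂μ + ∫ x, c x * w (f x) * f x ∂μ := by
    intro μ _
    rw [← integral_const_mul, ← integral_add ((hig μ).const_mul k) (higf μ)]
    congr 1; funext x; ring
  have e4 : ∫ x, c x * w (f x) * (1 - f x) ∂Pp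
      = ∫ x, c x * w (f x) ∂Pp - ∫ x, c x * w (f x) * f x ∂Pp := by
    rw [← integral_sub (hig Pp) (higf Pp)]
    congr 1; funext x; ring
  rw [e3 Pp, e3 Pm, e4]
  set A := ∫ x, c x * w (f x) ∂Pp with hA
  set B := ∫ x, c x * w (f x) ∂Pm with hB
  set C := ∫ x, c x * w (f x) * f x ∂Pp with hC
  set D := ∫ x, c x * w (f x) * f x ∂Pm with hD
  rw [hk, hs, hq]
  have hd2 : pip - (1 - pip) ≠ 0 := by rw [hq] at hd; exact hd
  have hs2 : pip ^ 2 + (1 - pip) ^ 2 ≠ 0 := ne_of_gt (by nlinarith [sq_nonneg (pip - 1/2)])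
  field_simp
  ring
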